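/- Let T be a 3×3 unitary matrix whose eigenvalues are roots of unity, such that for each j the eigenvalues of T·Sⱼ are also roots of unity (Sⱼ the diagonal sign matrices). If |T_{jj}| = 1/2, then T_{jj} = ξ/2 for some root of unity ξ. -/

import Mathlib

def IsRootOfUnity (z : ℂ) : Prop := ∃ n : ℕ, 0 < n ∧ z ^ n = 1

def S (j : Fin 3) : Matrix (Fin 3) (Fin 3) ℂ :=
  Matrix.diagonal (fun k => if k = j then 1 else -1)

open Polynomial

lemma abs_eq_one_of_pow {z : ℂ} {N : ℕ} (hN : 0 < N) (h : z ^ N = 1) : ‖z‖ = 1 := by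
  have habs : ‖z‖ ^ N = 1 := by
    rw [← norm_pow, h, norm_one]
  rcases (pow_eq_one_iff_cases).mp habs with h' | h' | h'
  · omega
  · exact h'
  · have := norm_nonneg z; nlinarith

lemma exists_exponent (M : Multiset ℂ) (hM : ∀ z ∈ M, IsRootOfUnity z) :
    ∃ N : ℕ, 0 < N ∧ ∀ z ∈ M, z ^ N = 1 := by
  induction M using Multiset.induction with
  | empty => exact ⟨1, one_pos, by simp⟩
  | cons a s ih =>
    obtain ⟨N, hN, hNs⟩ := ih (fun z hz => hM z (Multiset.mem_cons_of_mem hz))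
    obtain ⟨m, hm, ha⟩ := hM a (Multiset.mem_cons_self a s)
    refine ⟨m * N, Nat.mul_pos hm hN, fun z hz => ?_⟩
    rcases Multiset.mem_cons.mp hz with rfl | hz
    · rw [pow_mul, ha, one_pow]
    · rw [mul_comm, pow_mul, hNs z hz, one_pow]

lemma sum_int {K : Type*} [Field K] [Algebra ℚ K] {N : ℕ} (hN : 0 < N) :
    ∀ (W : Multiset K), (∀ w ∈ W, w ^ N = 1) → IsIntegral ℤ W.sum := by
  intro W
  induction W using Multiset.induction with
  | empty => intro _; simpa using isIntegral_zero
  | cons a s ih =>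
    intro hW
    rw [Multiset.sum_cons]
    refine IsIntegral.add ⟨X ^ N - 1, ?_, ?_⟩ (ih fun w hw => hW w (Multiset.mem_cons_of_mem hw))
    · simpa using monic_X_pow_sub_C (1 : ℤ) hN.ne'
    · simp [hW a (Multiset.mem_cons_self a s)]

/-- A sum of roots of unity with modulus 1 is a root of unity (Kronecker-type theorem). -/
lemma sum_rootsOfUnity (M : Multiset ℂ) (hM : ∀ z ∈ M, IsRootOfUnity z)
    (h1 : ‖M.sum‖ = 1) : IsRootOfUnity M.sum := by
  obtain ⟨N, hN, hNM⟩ := exists_exponent M hM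
  set Np : ℕ+ := ⟨N, hN⟩
  have : NeZero N := ⟨hN.ne'⟩
  let K := CyclotomicField N ℚ
  have : NeZero (N : ℚ) := ⟨by exact_mod_cast hN.ne'⟩
  have : IsCyclotomicExtension {N} ℚ K := CyclotomicField.isCyclotomicExtension N ℚ
  have : NumberField K := IsCyclotomicExtension.numberField {N} ℚ K
  set ζ : K := IsCyclotomicExtension.zeta N ℚ K
  have hζ : IsPrimitiveRoot ζ N := IsCyclotomicExtension.zeta_spec N ℚ K
  let φ : K →+* ℂ := (IsAlgClosed.lift (R := ℚ) (M := ℂ)).toRingHom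
  have hφ : Function.Injective φ := φ.injective
  have hφζ : IsPrimitiveRoot (φ ζ) N := hζ.map_of_injective hφ
  have : NeZero N := ⟨hN.ne'⟩
  -- lift M to a multiset of roots of unity in K
  obtain ⟨W, hWmap, hWpow⟩ : ∃ W : Multiset K, W.map φ = M ∧ ∀ w ∈ W, w ^ N = 1 := by
    clear h1
    induction M using Multiset.induction with
    | empty => exact ⟨0, by simp, by simp⟩
    | cons a s ih =>
      obtain ⟨W, hW1, hW2⟩ := ih (fun z hz => hM z (Multiset.mem_cons_of_mem hz))
        (fun z hz => hNM z (Multiset.mem_cons_of_mem hz))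
      obtain ⟨i, _, hi⟩ := hφζ.eq_pow_of_pow_eq_one (hNM a (Multiset.mem_cons_self a s))
      refine ⟨ζ ^ i ::ₘ W, ?_, ?_⟩
      · rw [Multiset.map_cons, hW1, map_pow, hi]
      · intro w hw
        rcases Multiset.mem_cons.mp hw with rfl | hw
        · rw [← pow_mul, mul_comm, pow_mul, hζ.pow_eq_one, one_pow]
        · exact hW2 w hw
  set x : K := W.sum with hx
  have hφx : φ x = M.sum := by rw [hx, ← hWmap, map_multiset_sum]
  set x' : K := (W.map (·⁻¹)).sum with hx'
  -- complex conjugation of `ψ x` is `ψ x'` for every embedding `ψ`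
  have key : ∀ ψ : K →+* ℂ, (starRingEnd ℂ) (ψ x) = ψ x' := by
    intro ψ
    rw [hx, hx', map_multiset_sum, map_multiset_sum, map_multiset_sum, Multiset.map_map,
      Multiset.map_map]
    congr 1
    refine Multiset.map_congr rfl fun w hw => ?_
    have h1 : ‖ψ w‖ = 1 := by
      exact abs_eq_one_of_pow hN (by rw [← map_pow, hWpow w hw, map_one])
    simp only [Function.comp_apply, map_inv₀]
    rw [← Complex.inv_eq_conj h1]
  have hxx' : x * x' = 1 := by
    apply hφ
    rw [map_mul, map_one, hφx, ← key φ, hφx, Complex.mul_conj, ← Complex.sq_norm, h1]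
    norm_num
  have hnorm : ∀ ψ : K →+* ℂ, ‖ψ x‖ = 1 := by
    intro ψ
    have : ψ x * (starRingEnd ℂ) (ψ x) = 1 := by
      rw [key ψ, ← map_mul, hxx', map_one]
    rw [Complex.mul_conj, ← Complex.sq_norm] at this
    have h2 : ‖ψ x‖ ^ 2 = 1 := by exact_mod_cast this
    nlinarith [norm_nonneg (ψ x)]
  have hint : IsIntegral ℤ x := sum_int hN W hWpow
  obtain ⟨n, hn, hxn⟩ := NumberField.Embeddings.pow_eq_one_of_norm_eq_one K ℂ hint hnorm
  exact ⟨n, hn, by rw [← hφx, ← map_pow, hxn, map_one]⟩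

lemma mem_spectrum_of_charpoly_root {n : Type*} [Fintype n] [DecidableEq n]
    (A : Matrix n n ℂ) {μ : ℂ} (hμ : A.charpoly.IsRoot μ) : μ ∈ spectrum ℂ A := by
  rw [spectrum.mem_iff]
  intro hunit
  rw [Matrix.isUnit_iff_isUnit_det] at hunit
  have hdet : (algebraMap ℂ (Matrix n n ℂ) μ - A).det = Polynomial.eval μ A.charpoly := by
    rw [Matrix.charpoly, _root_.eval_det, Matrix.matPolyEquiv_charmatrix]
    simp [Matrix.scalar, algebraMap]
  rw [hdet, hμ] at hunit
  exact hunit.ne_zero rfl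

theorem stmt4 (T : Matrix (Fin 3) (Fin 3) ℂ) (hT : T ∈ Matrix.unitaryGroup (Fin 3) ℂ)
    (hspec : ∀ μ ∈ spectrum ℂ T, IsRootOfUnity μ)
    (hspecS : ∀ j : Fin 3, ∀ μ ∈ spectrum ℂ (T * S j), IsRootOfUnity μ)
    (j : Fin 3) (h : ‖T j j‖ = 1 / 2) :
    ∃ ξ : ℂ, IsRootOfUnity ξ ∧ T j j = ξ / 2 := by
  have htr : T.trace + (T * S j).trace = 2 * T j j := by
    simp only [Matrix.trace, Matrix.diag, S, Matrix.mul_diagonal]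
    fin_cases j <;> simp [Fin.sum_univ_three] <;> ring
  have h1 : T.trace = T.charpoly.roots.sum := Matrix.trace_eq_sum_roots_charpoly T
  have h2 : (T * S j).trace = (T * S j).charpoly.roots.sum :=
    Matrix.trace_eq_sum_roots_charpoly _
  set M : Multiset ℂ := T.charpoly.roots + (T * S j).charpoly.roots with hMdef
  have hMsum : M.sum = 2 * T j j := by
    rw [hMdef, Multiset.sum_add, ← h1, ← h2, htr]
  have hMru : ∀ z ∈ M, IsRootOfUnity z := by
    intro z hz
    rcases Multiset.mem_add.mp hz with hz | hz
    · exact hspec z (mem_spectrum_of_charpoly_root T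
        (Polynomial.isRoot_of_mem_roots hz))
    · exact hspecS j z (mem_spectrum_of_charpoly_root _
        (Polynomial.isRoot_of_mem_roots hz))
  have habs : ‖M.sum‖ = 1 := by
    rw [hMsum, norm_mul, h]
    norm_num
  obtain ⟨n, hn, hns⟩ := sum_rootsOfUnity M hMru habs
  exact ⟨2 * T j j, ⟨n, hn, by rw [← hMsum]; exact hns⟩, by ring⟩
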